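/- Let p ∈ (0,1), c > 0, φ > 0, Ā > 0 with c ∈ [p²φ/(2Ā), φ/(2Ā)). Define A₁* = φ·(2·sqrt(2cĀ/φ) − p)/(2c) and A₂* = (Ā − p·A₁*)/(1−p). Then p·A₁* + (1−p)·A₂* = Ā and A₂* ≥ 0, and p·φ + sqrt(cφ(1−p)A₂*/2) = pφ/2 + sqrt(cφĀ/2). -/

import Mathlib

/-- With A₁* = φ(2√(2cĀ/φ) − p)/(2c) and A₂* = (Ā − pA₁*)/(1−p),
we have pA₁* + (1−p)A₂* = Ā, A₂* ≥ 0, and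
pφ + √(cφ(1−p)A₂*/2) = pφ/2 + √(cφĀ/2). -/
theorem stmt_5 (p c φ A : ℝ) (hp : p ∈ Set.Ioo (0 : ℝ) 1) (hc : 0 < c)
    (hφ : 0 < φ) (hA : 0 < A)
    (hcl : p ^ 2 * φ / (2 * A) ≤ c) (hcu : c < φ / (2 * A))
    (A₁ A₂ : ℝ)
    (hA₁ : A₁ = φ * (2 * Real.sqrt (2 * c * A / φ) - p) / (2 * c))
    (hA₂ : A₂ = (A - p * A₁) / (1 - p)) :
    p * A₁ + (1 - p) * A₂ = A ∧ 0 ≤ A₂ ∧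
      p * φ + Real.sqrt (c * φ * (1 - p) * A₂ / 2) =
        p * φ / 2 + Real.sqrt (c * φ * A / 2) := by
  obtain ⟨hp0, hp1⟩ := hp
  have h1p : (0:ℝ) < 1 - p := by linarith
  set s := Real.sqrt (2 * c * A / φ) with hs
  have hsnn : 0 ≤ s := Real.sqrt_nonneg _
  have hs2 : s ^ 2 = 2 * c * A / φ := Real.sq_sqrt (by positivity)
  have hAeq : A = φ * s ^ 2 / (2 * c) := by
    rw [hs2]; field_simp
  have hps : p ≤ s := by
    have hp2 : p ^ 2 ≤ 2 * c * A / φ := by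
      rw [div_le_iff₀ (by positivity)] at hcl
      rw [le_div_iff₀ hφ]; nlinarith
    nlinarith [hs2]
  have h1 : A - p * A₁ = φ * (s - p) ^ 2 / (2 * c) := by
    rw [hA₁, hAeq]; field_simp; ring
  have hfirst : p * A₁ + (1 - p) * A₂ = A := by
    rw [hA₂]; field_simp; ring
  have hA2eq : A₂ = φ * (s - p) ^ 2 / (2 * c) / (1 - p) := by
    rw [hA₂, h1]
  have hA2nn : 0 ≤ A₂ := by rw [hA2eq]; positivity
  refine ⟨hfirst, hA2nn, ?_⟩
  have hL : c * φ * (1 - p) * A₂ / 2 = (φ * (s - p) / 2) ^ 2 := by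
    rw [hA2eq]; field_simp
  have hR : c * φ * A / 2 = (φ * s / 2) ^ 2 := by
    rw [hAeq]; field_simp
  rw [hL, hR, Real.sqrt_sq (by nlinarith), Real.sqrt_sq (by positivity)]
  ring
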